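/- Let k ≥ 1 and let σ, τ : {1,…,k} → ℤ∖{0}. Let G be the group with presentation ⟨a, t_1, …, t_k ∣ t_i a^{σ_i} t_i^{-1} = a^{τ_i} for 1 ≤ i ≤ k⟩. Then for all integers m and n, the elements a^m and a^n are conjugate in G if and only if there exists a finite sequence of integers m_0 = m, m_1, …, m_s = n such that for every i < s there is an index j ∈ {1,…,k} with either (σ_j divides m_i and m_{i+1}·σ_j = m_i·τ_j) or (τ_j divides m_i and m_{i+1}·τ_j = m_i·σ_j). -/

import Mathlib

/-- Generators of the one-vertex GBS group: `Sum.inl ()` is the vertex generator `a`,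
and `Sum.inr i` is the stable letter `t_i` of the `i`-th loop. -/
abbrev BSGen (k : ℕ) : Type := Unit ⊕ Fin k

/-- The relators `t_i a^{σ i} t_i⁻¹ a^{-τ i}` of the presentation
`⟨a, t_1, …, t_k ∣ t_i a^{σ_i} t_i⁻¹ = a^{τ_i}⟩`. -/
def BSRels (k : ℕ) (σ τ : Fin k → ℤ) : Set (FreeGroup (BSGen k)) :=
  {r | ∃ i : Fin k,
    r = FreeGroup.of (Sum.inr i) * (FreeGroup.of (Sum.inl ())) ^ (σ i) *
        (FreeGroup.of (Sum.inr i))⁻¹ * (FreeGroup.of (Sum.inl ())) ^ (-(τ i))}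
namespace BS9

abbrev Letter (k : ℕ) : Type := Fin k × Bool × ℤ

variable {k : ℕ} (σ τ : Fin k → ℤ)

/-- modulus used when pushing `t_j^e` past a power of `a` (left action):
for `e = true` (letter `t_j`) it is `σ j`, for `e = false` (letter `t_j⁻¹`) it is `τ j`. -/
def mo (e : Bool) (j : Fin k) : ℤ := if e then σ j else τ j

lemma mo_ne (hσ : ∀ i, σ i ≠ 0) (hτ : ∀ i, τ i ≠ 0) (e : Bool) (j : Fin k) :
    mo σ τ e j ≠ 0 := by cases e <;> simp [mo, hσ j, hτ j]

/-- bound condition on a letter of a normal form -/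
def Ok (x : Letter k) : Prop := 0 ≤ x.2.2 ∧ x.2.2 < |mo σ τ x.2.1 x.1|

/-- no-cancellation condition between consecutive letters -/
def NC (x y : Letter k) : Prop := x.2.2 = 0 → y.1 = x.1 → y.2.1 = x.2.1

def Valid (l : List (Letter k)) : Prop := (∀ x ∈ l, Ok σ τ x) ∧ l.IsChain NC

lemma valid_nil : Valid σ τ ([] : List (Letter k)) := ⟨by simp, by simp⟩

lemma Valid.tail {x : Letter k} {l : List (Letter k)} (h : Valid σ τ (x :: l)) :
    Valid σ τ l :=
  ⟨fun y hy => h.1 y (List.mem_cons_of_mem _ hy), h.2.tail⟩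

/-- the underlying space of normal forms -/
def X := {x : ℤ × List (Letter k) // Valid σ τ x.2}

/-- left action of `t_j^e` on a (not necessarily valid) word. -/
def tFun (e : Bool) (j : Fin k) : ℤ × List (Letter k) → ℤ × List (Letter k)
  | (c, (j', e', c₁) :: l') =>
    if c % |mo σ τ e j| = 0 ∧ j' = j ∧ e' = !e then
      (mo σ τ (!e) j * ((c - c % |mo σ τ e j|) / mo σ τ e j) + c₁, l')
    else
      (mo σ τ (!e) j * ((c - c % |mo σ τ e j|) / mo σ τ e j),
        (j, e, c % |mo σ τ e j|) :: (j', e', c₁) :: l')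
  | (c, []) =>
      (mo σ τ (!e) j * ((c - c % |mo σ τ e j|) / mo σ τ e j),
        [(j, e, c % |mo σ τ e j|)])

lemma exQR (u c : ℤ) (hu : u ≠ 0) : ∃ q r : ℤ, c = u * q + r ∧ 0 ≤ r ∧ r < |u| := by
  have hN : (0:ℤ) < |u| := abs_pos.2 hu
  have key : c - c % |u| = |u| * (c / |u|) := by
    have := Int.ediv_mul_add_emod c |u|; linarith
  obtain ⟨t, ht⟩ : u ∣ c - c % |u| := key ▸ Dvd.dvd.mul_right ((dvd_abs u u).mpr dvd_rfl) _
  exact ⟨t, c % |u|, by linarith, Int.emod_nonneg c (ne_of_gt hN), Int.emod_lt_of_pos c hN⟩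

lemma qr_uniq {u q r c : ℤ} (h : c = u * q + r) (h0 : 0 ≤ r) (h1 : r < |u|) :
    c % |u| = r ∧ (c - c % |u|) / u = q := by
  have hu : u ≠ 0 := by
    rintro rfl; simp at h1; omega
  have habs : |u| ∣ u * q := (abs_dvd u (u*q)).mpr (dvd_mul_right u q)
  obtain ⟨t, ht⟩ := habs
  have hmod : c % |u| = r := by
    rw [h, ht, add_comm, Int.add_mul_emod_self_left, Int.emod_eq_of_lt h0 h1]
  refine ⟨hmod, ?_⟩
  rw [hmod]
  have : c - r = u * q := by rw [h]; ring
  rw [this, Int.mul_ediv_cancel_left _ hu]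
lemma tFun_cancel' {e e' : Bool} {j : Fin k} {q c c₁ : ℤ} {l' : List (Letter k)}
    (hu : mo σ τ e j ≠ 0) (he' : e' = !e) (hc : c = mo σ τ e j * q) :
    tFun σ τ e j (c, (j, e', c₁) :: l') = (mo σ τ (!e) j * q + c₁, l') := by
  obtain ⟨h1, h2⟩ := qr_uniq (u := mo σ τ e j) (q := q) (r := 0) (c := c)
    (by rw [hc, add_zero]) le_rfl (abs_pos.2 hu)
  have h2' : (c - 0) / mo σ τ e j = q := by rw [← h1]; exact h2
  simp only [tFun, h1, h2']
  rw [if_pos ⟨trivial, trivial, he'⟩]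

lemma tFun_push {e : Bool} {j : Fin k} {c q r : ℤ} {l : List (Letter k)}
    (h : c = mo σ τ e j * q + r) (h0 : 0 ≤ r) (h1 : r < |mo σ τ e j|)
    (hnc : r = 0 → ∀ c₁ l', l ≠ (j, !e, c₁) :: l') :
    tFun σ τ e j (c, l) = (mo σ τ (!e) j * q, (j, e, r) :: l) := by
  obtain ⟨hm, hd⟩ := qr_uniq h h0 h1
  have hd' : (c - r) / mo σ τ e j = q := by rw [← hm]; exact hd
  match l with
  | [] => simp only [tFun, hm, hd']
  | (j', e', c₁) :: l' =>
    have hcond : ¬(r = 0 ∧ j' = j ∧ e' = !e) := by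
      rintro ⟨hr0, rfl, rfl⟩; exact hnc hr0 c₁ l' rfl
    simp only [tFun, hm, hd', if_neg hcond]

lemma tFun_len (e : Bool) (j : Fin k) (x : ℤ × List (Letter k)) :
    (tFun σ τ e j x).2.length ≤ x.2.length + 1 := by
  obtain ⟨c, l⟩ := x
  match l with
  | [] => simp [tFun]
  | (j', e', c₁) :: l' =>
    simp only [tFun]
    split <;> simp <;> omega

lemma bool_eq_not_of_ne {a b : Bool} (h : a ≠ b) : a = !b := by
  cases a <;> cases b <;> simp_all

lemma valid_tFun (hσ : ∀ i, σ i ≠ 0) (hτ : ∀ i, τ i ≠ 0) (e : Bool) (j : Fin k)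
    (x : ℤ × List (Letter k)) (h : Valid σ τ x.2) : Valid σ τ (tFun σ τ e j x).2 := by
  classical
  obtain ⟨c, l⟩ := x
  have hu := mo_ne σ τ hσ hτ e j
  obtain ⟨q, r, hc, h0, h1⟩ := exQR (mo σ τ e j) c hu
  by_cases hcan : r = 0 ∧ ∃ c₁ l', l = (j, !e, c₁) :: l'
  · obtain ⟨hr, c₁, l', rfl⟩ := hcan
    subst hr
    rw [add_zero] at hc
    rw [tFun_cancel' σ τ hu rfl hc]
    exact (Valid.tail σ τ h)
  · push_neg at hcan
    rw [tFun_push σ τ hc h0 h1 (fun hr c₁ l' hl => (hcan hr c₁ l' hl).elim)]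
    constructor
    · rintro y hy
      rcases List.mem_cons.1 hy with rfl | hy'
      · exact ⟨h0, h1⟩
      · exact h.1 y hy'
    · match l with
      | [] => simp
      | (j₂, e₂, c₂) :: l₂ =>
        rw [List.isChain_cons_cons]
        refine ⟨?_, h.2⟩
        intro hr hj2 ; dsimp at hj2 ⊢
        by_contra hne
        have he2 : e₂ = !e := bool_eq_not_of_ne hne
        exact hcan hr c₂ l₂ (by rw [hj2, he2])

lemma tFun_invol (hσ : ∀ i, σ i ≠ 0) (hτ : ∀ i, τ i ≠ 0) (e : Bool) (j : Fin k)
    (x : ℤ × List (Letter k)) (h : Valid σ τ x.2) :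
    tFun σ τ (!e) j (tFun σ τ e j x) = x := by
  classical
  obtain ⟨c, l⟩ := x
  have hu := mo_ne σ τ hσ hτ e j
  have hu' := mo_ne σ τ hσ hτ (!e) j
  obtain ⟨q, r, hc, h0, h1⟩ := exQR (mo σ τ e j) c hu
  by_cases hcan : r = 0 ∧ ∃ c₁ l', l = (j, !e, c₁) :: l'
  · obtain ⟨hr, c₁, l', rfl⟩ := hcan
    subst hr
    rw [add_zero] at hc
    rw [tFun_cancel' σ τ hu rfl hc]
    -- now apply tFun (!e) j to (mo (!e) j * q + c₁, l')
    have hok : Ok σ τ (j, !e, c₁) := h.1 _ (List.mem_cons_self)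
    obtain ⟨hb0, hb1⟩ := hok
    have hnc : c₁ = 0 → ∀ c₂ l₂, l' ≠ (j, !(!e), c₂) :: l₂ := by
      intro hr0 c₂ l₂ hl
      have := h.2
      rw [hl, List.isChain_cons_cons] at this
      have := this.1 hr0 rfl
      simp at this
    rw [tFun_push σ τ rfl hb0 hb1 hnc, Bool.not_not, ← hc]
  · push_neg at hcan
    rw [tFun_push σ τ hc h0 h1 (fun hr c₁ l' hl => (hcan hr c₁ l' hl).elim)]
    rw [tFun_cancel' σ τ hu' (Bool.not_not e).symm rfl, Bool.not_not, ← hc]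

variable (hσ : ∀ i, σ i ≠ 0) (hτ : ∀ i, τ i ≠ 0)

/-- the shift permutation (action of `a^s`) -/
def shiftP (s : ℤ) : Equiv.Perm (X σ τ) where
  toFun x := ⟨(x.1.1 + s, x.1.2), x.2⟩
  invFun x := ⟨(x.1.1 - s, x.1.2), x.2⟩
  left_inv x := Subtype.ext (by obtain ⟨⟨c, l⟩, h⟩ := x; simp)
  right_inv x := Subtype.ext (by obtain ⟨⟨c, l⟩, h⟩ := x; simp)

/-- the permutation given by the action of `t_j^e` -/
def tP (e : Bool) (j : Fin k) : Equiv.Perm (X σ τ) where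
  toFun x := ⟨tFun σ τ e j x.1, valid_tFun σ τ hσ hτ e j x.1 x.2⟩
  invFun x := ⟨tFun σ τ (!e) j x.1, valid_tFun σ τ hσ hτ (!e) j x.1 x.2⟩
  left_inv x := Subtype.ext (tFun_invol σ τ hσ hτ e j x.1 x.2)
  right_inv x := Subtype.ext (by
    have := tFun_invol σ τ hσ hτ (!e) j x.1 x.2
    rwa [Bool.not_not] at this)

lemma tP_inv (e : Bool) (j : Fin k) : (tP σ τ hσ hτ e j)⁻¹ = tP σ τ hσ hτ (!e) j := by
  ext x
  rfl

lemma shiftP_apply (s : ℤ) (x : X σ τ) :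
    (shiftP σ τ s x).1 = (x.1.1 + s, x.1.2) := rfl

lemma shiftP_mul (s s' : ℤ) : shiftP σ τ s * shiftP σ τ s' = shiftP σ τ (s + s') := by
  ext x
  refine Subtype.ext ?_
  show ((x.1.1 + s') + s, x.1.2) = (x.1.1 + (s + s'), x.1.2)
  rw [add_assoc, add_comm s' s]

lemma shiftP_zero : shiftP σ τ 0 = 1 := by
  ext x
  exact Subtype.ext (by show (x.1.1 + 0, x.1.2) = x.1; simp)

lemma shiftP_inv (s : ℤ) : (shiftP σ τ s)⁻¹ = shiftP σ τ (-s) := by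
  apply inv_eq_of_mul_eq_one_right
  rw [shiftP_mul, add_neg_cancel, shiftP_zero]

lemma shiftP_zpow (s : ℤ) : (shiftP σ τ 1) ^ s = shiftP σ τ s := by
  induction s using Int.induction_on with
  | zero => rw [zpow_zero, shiftP_zero]
  | succ n ih => rw [zpow_add_one, ih, shiftP_mul]
  | pred n ih =>
      rw [zpow_sub_one, ih, shiftP_inv, shiftP_mul]
      ring_nf

/-- key commutation at the level of permutations -/
lemma tP_shift (e : Bool) (j : Fin k) :
    tP σ τ hσ hτ e j * shiftP σ τ (mo σ τ e j) =
      shiftP σ τ (mo σ τ (!e) j) * tP σ τ hσ hτ e j := by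
  classical
  ext x
  obtain ⟨⟨c, l⟩, hv⟩ := x
  have hu := mo_ne σ τ hσ hτ e j
  obtain ⟨q, r, hc, h0, h1⟩ := exQR (mo σ τ e j) c hu
  erw [Equiv.Perm.mul_apply, Equiv.Perm.mul_apply]
  refine Subtype.ext ?_
  show tFun σ τ e j (c + mo σ τ e j, l)
      = ((tFun σ τ e j (c, l)).1 + mo σ τ (!e) j, (tFun σ τ e j (c, l)).2)
  by_cases hcan : r = 0 ∧ ∃ c₁ l', l = (j, !e, c₁) :: l'
  · obtain ⟨hr, c₁, l', rfl⟩ := hcan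
    subst hr
    rw [add_zero] at hc
    rw [tFun_cancel' σ τ hu rfl hc,
        tFun_cancel' σ τ hu rfl (show c + mo σ τ e j = mo σ τ e j * (q+1) by rw [hc]; ring)]
    simp only [Prod.mk.injEq]
    exact ⟨by ring, trivial⟩
  · push_neg at hcan
    have hnc : r = 0 → ∀ c₁ l', l ≠ (j, !e, c₁) :: l' := hcan
    rw [tFun_push σ τ hc h0 h1 hnc,
        tFun_push σ τ (show c + mo σ τ e j = mo σ τ e j * (q+1) + r by rw [hc]; ring) h0 h1 hnc]
    simp only [Prod.mk.injEq]
    exact ⟨by ring, trivial⟩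

/-- the GBS group -/
abbrev G (k : ℕ) (σ τ : Fin k → ℤ) : Type := PresentedGroup (BSRels k σ τ)

/-- the generator `a` -/
def A : G k σ τ := PresentedGroup.of (Sum.inl ())

/-- powers of `a` -/
def aP (c : ℤ) : G k σ τ := (A σ τ) ^ c

/-- the stable letter or its inverse -/
def tE (e : Bool) (j : Fin k) : G k σ τ :=
  if e then PresentedGroup.of (Sum.inr j) else (PresentedGroup.of (Sum.inr j))⁻¹

lemma tE_inv (e : Bool) (j : Fin k) : (tE σ τ e j)⁻¹ = tE σ τ (!e) j := by
  cases e <;> simp [tE]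

lemma relG (j : Fin k) :
    tE σ τ true j * aP σ τ (σ j) * (tE σ τ true j)⁻¹ = aP σ τ (τ j) := by
  have h1 : (PresentedGroup.mk (BSRels k σ τ)
      (FreeGroup.of (Sum.inr j) * (FreeGroup.of (Sum.inl ())) ^ (σ j) *
        (FreeGroup.of (Sum.inr j))⁻¹ * (FreeGroup.of (Sum.inl ())) ^ (-(τ j)))) = 1 := by
    exact (QuotientGroup.eq_one_iff _).mpr (Subgroup.subset_normalClosure ⟨j, rfl⟩)
  simp only [map_mul, map_zpow, map_inv] at h1
  have h2 : tE σ τ true j * aP σ τ (σ j) * (tE σ τ true j)⁻¹ * aP σ τ (-(τ j)) = 1 := h1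
  have h3 : aP σ τ (-(τ j)) = (aP σ τ (τ j))⁻¹ := by rw [aP, aP, zpow_neg]
  rw [h3] at h2
  exact eq_of_mul_inv_eq_one h2

lemma conj_zpow_eq {H : Type*} [Group H] (g x : H) (q : ℤ) :
    g * x ^ q * g⁻¹ = (g * x * g⁻¹) ^ q := by
  rw [← MulAut.conj_apply, ← MulAut.conj_apply, map_zpow]

/-- key commutation relation in `G` -/
lemma keyG (e : Bool) (j : Fin k) (q : ℤ) :
    tE σ τ e j * aP σ τ (mo σ τ e j * q) = aP σ τ (mo σ τ (!e) j * q) * tE σ τ e j := by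
  have base : ∀ q : ℤ, tE σ τ true j * aP σ τ (σ j * q) * (tE σ τ true j)⁻¹
      = aP σ τ (τ j * q) := by
    intro q
    have : aP σ τ (σ j * q) = (aP σ τ (σ j)) ^ q := by
      rw [aP, aP, ← zpow_mul]
    rw [this, conj_zpow_eq, relG σ τ j, aP, ← zpow_mul]
    rfl
  cases e with
  | true =>
      simp only [mo, Bool.not_true, Bool.false_eq_true, if_false, if_true]
      rw [← base q]
      group
  | false =>
      have := base q
      -- t⁻¹ * a^{τ q} = a^{σ q} * t⁻¹
      have h2 : (tE σ τ true j)⁻¹ * aP σ τ (τ j * q) = aP σ τ (σ j * q) * (tE σ τ true j)⁻¹ := by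
        rw [← this]; group
      simp only [mo, Bool.not_false, Bool.false_eq_true, if_false, if_true]
      have h3 : tE σ τ false j = (tE σ τ true j)⁻¹ := by simp [tE]
      rw [h3]
      exact h2
/-- generator assignment for the permutation representation -/
def fGen : BSGen k → Equiv.Perm (X σ τ)
  | Sum.inl _ => shiftP σ τ 1
  | Sum.inr j => tP σ τ hσ hτ true j

lemma relCheck : ∀ r ∈ BSRels k σ τ, FreeGroup.lift (fGen σ τ hσ hτ) r = 1 := by
  rintro r ⟨i, rfl⟩
  simp only [map_mul, map_zpow, map_inv, FreeGroup.lift_apply_of]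
  show tP σ τ hσ hτ true i * (shiftP σ τ 1) ^ (σ i) * (tP σ τ hσ hτ true i)⁻¹ *
      (shiftP σ τ 1) ^ (-(τ i)) = 1
  rw [shiftP_zpow, shiftP_zpow]
  have h := tP_shift σ τ hσ hτ true i
  simp only [mo, Bool.not_true, Bool.false_eq_true, if_false, if_true] at h
  rw [h, mul_inv_cancel_right, shiftP_mul, add_neg_cancel, shiftP_zero]

/-- the permutation representation of `G` -/
def φh : G k σ τ →* Equiv.Perm (X σ τ) :=
  PresentedGroup.toGroup (relCheck σ τ hσ hτ)

lemma φh_a : φh σ τ hσ hτ (A σ τ) = shiftP σ τ 1 :=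
  PresentedGroup.toGroup.of _

lemma φh_aP (c : ℤ) : φh σ τ hσ hτ (aP σ τ c) = shiftP σ τ c := by
  rw [aP, map_zpow, φh_a, shiftP_zpow]

lemma φh_t (e : Bool) (j : Fin k) : φh σ τ hσ hτ (tE σ τ e j) = tP σ τ hσ hτ e j := by
  cases e with
  | true => exact PresentedGroup.toGroup.of _
  | false =>
      have : tE σ τ false j = (tE σ τ true j)⁻¹ := by simp [tE]
      rw [this, map_inv]
      have h1 : φh σ τ hσ hτ (tE σ τ true j) = tP σ τ hσ hτ true j :=
        PresentedGroup.toGroup.of _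
      rw [h1, tP_inv]
      rfl

/-- reading a word back into the group -/
def rd (x : ℤ × List (Letter k)) : G k σ τ :=
  aP σ τ x.1 * (x.2.map (fun y => tE σ τ y.2.1 y.1 * aP σ τ y.2.2)).prod

lemma aP_add (s t : ℤ) : aP σ τ (s + t) = aP σ τ s * aP σ τ t := zpow_add _ s t

lemma rd_nil (c : ℤ) : rd σ τ (c, []) = aP σ τ c := by simp [rd]

lemma rd_cons (c : ℤ) (y : Letter k) (l : List (Letter k)) :
    rd σ τ (c, y :: l) = aP σ τ c * tE σ τ y.2.1 y.1 * rd σ τ (y.2.2, l) := by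
  simp [rd, mul_assoc]

lemma rd_shift (s c : ℤ) (l : List (Letter k)) :
    rd σ τ (c + s, l) = aP σ τ s * rd σ τ (c, l) := by
  simp only [rd]
  rw [show c + s = s + c from add_comm c s, aP_add, mul_assoc]

include hσ hτ in
lemma rd_tFun (e : Bool) (j : Fin k) (x : ℤ × List (Letter k)) :
    rd σ τ (tFun σ τ e j x) = tE σ τ e j * rd σ τ x := by
  classical
  obtain ⟨c, l⟩ := x
  have hu := mo_ne σ τ hσ hτ e j
  obtain ⟨q, r, hc, h0, h1⟩ := exQR (mo σ τ e j) c hu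
  by_cases hcan : r = 0 ∧ ∃ c₁ l', l = (j, !e, c₁) :: l'
  · obtain ⟨hr, c₁, l', rfl⟩ := hcan
    subst hr
    rw [add_zero] at hc
    rw [tFun_cancel' σ τ hu rfl hc]
    rw [show mo σ τ (!e) j * q + c₁ = c₁ + mo σ τ (!e) j * q from add_comm _ _, rd_shift,
      rd_cons]
    dsimp only
    rw [show (c : ℤ) = mo σ τ e j * q from hc]
    rw [← mul_assoc, ← mul_assoc, keyG σ τ e j q, ← tE_inv σ τ e j, mul_inv_cancel_right]
  · push_neg at hcan
    have hnc : r = 0 → ∀ c₁ l', l ≠ (j, !e, c₁) :: l' := hcan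
    rw [tFun_push σ τ hc h0 h1 hnc, rd_cons]
    dsimp only
    rw [show (c : ℤ) = mo σ τ e j * q + r from hc,
      show mo σ τ e j * q + r = r + mo σ τ e j * q from add_comm _ _, rd_shift,
      ← mul_assoc, keyG σ τ e j q]

lemma equiv_rd (g : G k σ τ) :
    ∀ x : X σ τ, rd σ τ ((φh σ τ hσ hτ g) x).1 = g * rd σ τ x.1 := by
  have hg : g ∈ Subgroup.closure (Set.range (PresentedGroup.of : BSGen k → G k σ τ)) := by
    rw [PresentedGroup.closure_range_of]; trivial
  induction hg using Subgroup.closure_induction with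
  | mem g hgen =>
      obtain ⟨s, rfl⟩ := hgen
      intro x
      match s with
      | Sum.inl () =>
          rw [show φh σ τ hσ hτ (PresentedGroup.of (Sum.inl ())) = shiftP σ τ 1 from
            φh_a σ τ hσ hτ]
          have h2 : ((shiftP σ τ 1) x).1 = (x.1.1 + 1, x.1.2) := rfl
          rw [h2, rd_shift]
          congr 1
      | Sum.inr j =>
          have h1 : φh σ τ hσ hτ (PresentedGroup.of (Sum.inr j)) = tP σ τ hσ hτ true j :=
            PresentedGroup.toGroup.of _
          rw [h1]
          have h2 : ((tP σ τ hσ hτ true j) x).1 = tFun σ τ true j x.1 := rfl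
          rw [h2, rd_tFun σ τ hσ hτ]
          congr 1
  | one =>
      intro x
      rw [map_one]
      simp
  | mul g₁ g₂ hg₁ hg₂ ih₁ ih₂ =>
      intro x
      rw [map_mul, Equiv.Perm.mul_apply, ih₁, ih₂, mul_assoc]
  | inv g hgm ih =>
      intro x
      have h1 := ih ((φh σ τ hσ hτ g⁻¹) x)
      rw [← Equiv.Perm.mul_apply, ← map_mul, mul_inv_cancel, map_one,
        Equiv.Perm.one_apply] at h1
      rw [h1, inv_mul_cancel_left]
/-- base point -/
def x0 : X σ τ := ⟨(0, []), valid_nil σ τ⟩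

/-- the normal form of a group element -/
def NF (g : G k σ τ) : X σ τ := (φh σ τ hσ hτ g) (x0 σ τ)

lemma rd_NF (g : G k σ τ) : rd σ τ (NF σ τ hσ hτ g).1 = g := by
  rw [NF, equiv_rd σ τ hσ hτ]
  have : rd σ τ (x0 σ τ).1 = 1 := by
    simp [x0, rd, aP]
  rw [this, mul_one]

include hσ hτ in
lemma NF_rd : ∀ (l : List (Letter k)) (_ : Valid σ τ l) (c : ℤ),
    ((φh σ τ hσ hτ (rd σ τ (c, l))) (x0 σ τ)).1 = (c, l) := by
  intro l
  induction l with
  | nil =>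
      intro hv c
      rw [rd_nil, φh_aP]
      show ((0 : ℤ) + c, ([] : List (Letter k))) = (c, [])
      rw [zero_add]
  | cons y l ih =>
      intro hv c
      obtain ⟨j₁, e₁, c₁⟩ := y
      rw [rd_cons]
      dsimp only
      rw [map_mul, map_mul, φh_aP, φh_t, Equiv.Perm.mul_apply, Equiv.Perm.mul_apply]
      -- inner point
      have hin : ((φh σ τ hσ hτ (rd σ τ (c₁, l))) (x0 σ τ)).1 = (c₁, l) :=
        ih (Valid.tail σ τ hv) c₁
      have hOk : Ok σ τ (j₁, e₁, c₁) := hv.1 _ (List.mem_cons_self)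
      have hnc : c₁ = 0 → ∀ c₂ l₂, l ≠ (j₁, !e₁, c₂) :: l₂ := by
        intro h0 c₂ l₂ hl
        have h2 := hv.2
        rw [hl, List.isChain_cons_cons] at h2
        have := h2.1 h0 rfl
        simp at this
      have hpt : ((tP σ τ hσ hτ e₁ j₁) ((φh σ τ hσ hτ (rd σ τ (c₁, l))) (x0 σ τ))).1
          = (mo σ τ (!e₁) j₁ * 0, (j₁, e₁, c₁) :: l) := by
        show tFun σ τ e₁ j₁ ((φh σ τ hσ hτ (rd σ τ (c₁, l))) (x0 σ τ)).1 = _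
        rw [hin]
        exact tFun_push σ τ (by ring) hOk.1 hOk.2 hnc
      show ((tP σ τ hσ hτ e₁ j₁ ((φh σ τ hσ hτ (rd σ τ (c₁, l))) (x0 σ τ))).1.1 + c,
        (tP σ τ hσ hτ e₁ j₁ ((φh σ τ hσ hτ (rd σ τ (c₁, l))) (x0 σ τ))).1.2) = (c, (j₁, e₁, c₁) :: l)
      rw [hpt]
      dsimp only
      rw [mul_zero, zero_add]

/-- strip the leftmost letter of a normal form -/
lemma strip (g : G k σ τ) {c c₁ : ℤ} {j₁ : Fin k} {e₁ : Bool} {l : List (Letter k)}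
    (hN : (NF σ τ hσ hτ g).1 = (c, (j₁, e₁, c₁) :: l)) :
    g = aP σ τ c * tE σ τ e₁ j₁ * rd σ τ (c₁, l) ∧
      (NF σ τ hσ hτ (rd σ τ (c₁, l))).1 = (c₁, l) := by
  have hv : Valid σ τ ((j₁, e₁, c₁) :: l) := by
    have := (NF σ τ hσ hτ g).2
    rwa [hN] at this
  constructor
  · conv_lhs => rw [← rd_NF σ τ hσ hτ g, hN, rd_cons]
  · exact NF_rd σ τ hσ hτ l (Valid.tail σ τ hv) c₁

include hσ hτ in
lemma len_bound : ∀ (L : ℕ) (g : G k σ τ), (NF σ τ hσ hτ g).1.2.length = L →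
    ∀ x : X σ τ, ((φh σ τ hσ hτ g) x).1.2.length ≤ L + x.1.2.length := by
  intro L
  induction L with
  | zero =>
      intro g hg x
      have hnil : (NF σ τ hσ hτ g).1.2 = [] := List.length_eq_zero_iff.mp hg
      have hN : (NF σ τ hσ hτ g).1 = ((NF σ τ hσ hτ g).1.1, []) := by
        rw [← hnil]
      have hgeq : g = aP σ τ (NF σ τ hσ hτ g).1.1 := by
        conv_lhs => rw [← rd_NF σ τ hσ hτ g, hN, rd_nil]
      rw [hgeq, φh_aP]
      have : ((shiftP σ τ (NF σ τ hσ hτ g).1.1 x)).1.2 = x.1.2 := rfl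
      rw [this, zero_add]
  | succ L ih =>
      intro g hg x
      obtain ⟨y, l, hl⟩ : ∃ y l, (NF σ τ hσ hτ g).1.2 = y :: l := by
        cases hq : (NF σ τ hσ hτ g).1.2 with
        | nil => rw [hq] at hg; simp at hg
        | cons y l => exact ⟨y, l, rfl⟩
      obtain ⟨j₁, e₁, c₁⟩ := y
      have hN : (NF σ τ hσ hτ g).1 = ((NF σ τ hσ hτ g).1.1, (j₁, e₁, c₁) :: l) := by
        rw [← hl]
      obtain ⟨hgeq, hNg'⟩ := strip σ τ hσ hτ g hN
      have hlen' : (NF σ τ hσ hτ (rd σ τ (c₁, l))).1.2.length = L := by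
        rw [hNg']
        have h5 : ((j₁, e₁, c₁) :: l).length = L + 1 := by rw [← hl]; exact hg
        rw [List.length_cons] at h5
        dsimp only
        omega
      rw [hgeq, map_mul, map_mul, φh_aP, φh_t, Equiv.Perm.mul_apply, Equiv.Perm.mul_apply]
      have h1 := ih (rd σ τ (c₁, l)) hlen' x
      have h2 : ((tP σ τ hσ hτ e₁ j₁) ((φh σ τ hσ hτ (rd σ τ (c₁, l))) x)).1.2.length
          ≤ ((φh σ τ hσ hτ (rd σ τ (c₁, l))) x).1.2.length + 1 :=
        tFun_len σ τ e₁ j₁ _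
      have h3 : ((shiftP σ τ (NF σ τ hσ hτ g).1.1)
          ((tP σ τ hσ hτ e₁ j₁) ((φh σ τ hσ hτ (rd σ τ (c₁, l))) x))).1.2.length
          = ((tP σ τ hσ hτ e₁ j₁) ((φh σ τ hσ hτ (rd σ τ (c₁, l))) x)).1.2.length := rfl
      rw [h3]
      omega

include hσ hτ in
lemma len_eq (g : G k σ τ) (m : ℤ) :
    ((φh σ τ hσ hτ g) ⟨(m, []), valid_nil σ τ⟩).1.2.length
      = (NF σ τ hσ hτ g).1.2.length := by
  have h1 := len_bound σ τ hσ hτ _ g rfl ⟨(m, []), valid_nil σ τ⟩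
  have key : ∀ (h : G k σ τ) (s : ℤ) (y : X σ τ), φh σ τ hσ hτ (h * aP σ τ s) y
      = φh σ τ hσ hτ h ((shiftP σ τ s) y) := by
    intro h s y
    rw [map_mul, φh_aP, Equiv.Perm.mul_apply]
  have e1 : NF σ τ hσ hτ (g * aP σ τ m) = (φh σ τ hσ hτ g) ⟨(m, []), valid_nil σ τ⟩ := by
    rw [NF, key]
    congr 1
    exact Subtype.ext (by show ((0:ℤ)+m, ([]:List (Letter k))) = (m, []); rw [zero_add])
  have h2 := len_bound σ τ hσ hτ _ (g * aP σ τ m) rfl ⟨(-m, []), valid_nil σ τ⟩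
  have e2 : (φh σ τ hσ hτ (g * aP σ τ m)) ⟨(-m, []), valid_nil σ τ⟩ = NF σ τ hσ hτ g := by
    erw [key, NF]
    congr 1
    exact Subtype.ext (by show ((-m:ℤ)+m, ([]:List (Letter k))) = (0, []); rw [neg_add_cancel])
  rw [e2, e1] at h2
  have hn1 : (⟨(m, []), valid_nil σ τ⟩ : X σ τ).1.2.length = 0 := rfl
  have hn2 : (⟨(-m, []), valid_nil σ τ⟩ : X σ τ).1.2.length = 0 := rfl
  rw [hn1] at h1
  rw [hn2] at h2
  omega
/-- one conjugating step -/
def Step (m' n' : ℤ) : Prop :=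
  ∃ j : Fin k, (σ j ∣ m' ∧ n' * σ j = m' * τ j) ∨ (τ j ∣ m' ∧ n' * τ j = m' * σ j)

lemma aP_comm (s t : ℤ) : aP σ τ s * aP σ τ t = aP σ τ t * aP σ τ s := by
  rw [← aP_add, ← aP_add, add_comm]

include hσ hτ in
lemma main_fwd : ∀ (L : ℕ) (g : G k σ τ) (m n : ℤ),
    (NF σ τ hσ hτ g).1.2.length = L → g * aP σ τ m * g⁻¹ = aP σ τ n →
    Relation.ReflTransGen (Step σ τ) m n := by
  intro L
  induction L with
  | zero =>
      intro g m n hg hc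
      have hnil : (NF σ τ hσ hτ g).1.2 = [] := List.length_eq_zero_iff.mp hg
      have hN : (NF σ τ hσ hτ g).1 = ((NF σ τ hσ hτ g).1.1, []) := by rw [← hnil]
      have hgeq : g = aP σ τ (NF σ τ hσ hτ g).1.1 := by
        conv_lhs => rw [← rd_NF σ τ hσ hτ g, hN, rd_nil]
      have hmn : aP σ τ m = aP σ τ n := by
        rw [hgeq] at hc
        rw [← hc, aP_comm, mul_inv_cancel_right]
      have hval := congrArg (fun z => ((φh σ τ hσ hτ z) (x0 σ τ)).1) hmn
      simp only [φh_aP] at hval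
      have hm : ((shiftP σ τ m) (x0 σ τ)).1 = ((0 : ℤ) + m, ([] : List (Letter k))) := rfl
      have hn : ((shiftP σ τ n) (x0 σ τ)).1 = ((0 : ℤ) + n, ([] : List (Letter k))) := rfl
      rw [hm, hn, zero_add, zero_add, Prod.mk.injEq] at hval
      rw [hval.1]
  | succ L ih =>
      intro g m n hg hc
      obtain ⟨y, l, hl⟩ : ∃ y l, (NF σ τ hσ hτ g).1.2 = y :: l := by
        cases hq : (NF σ τ hσ hτ g).1.2 with
        | nil => rw [hq] at hg; simp at hg
        | cons y l => exact ⟨y, l, rfl⟩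
      obtain ⟨j₁, e₁, c₁⟩ := y
      have hN : (NF σ τ hσ hτ g).1 = ((NF σ τ hσ hτ g).1.1, (j₁, e₁, c₁) :: l) := by
        rw [← hl]
      have hvg : Valid σ τ ((j₁, e₁, c₁) :: l) := by
        have := (NF σ τ hσ hτ g).2
        rwa [hN] at this
      obtain ⟨hgeq, hNg'⟩ := strip σ τ hσ hτ g hN
      set g' := rd σ τ (c₁, l) with hg'def
      set c := (NF σ τ hσ hτ g).1.1 with hcdef
      have hL : l.length = L := by
        have h5 : ((j₁, e₁, c₁) :: l).length = L + 1 := by rw [← hl]; exact hg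
        rw [List.length_cons] at h5
        omega
      -- reduce the conjugation equation
      have hre : (aP σ τ c * tE σ τ e₁ j₁ * g') * aP σ τ m * (aP σ τ c * tE σ τ e₁ j₁ * g')⁻¹
          = aP σ τ c * (tE σ τ e₁ j₁ * (g' * aP σ τ m * g'⁻¹) * (tE σ τ e₁ j₁)⁻¹) * (aP σ τ c)⁻¹ := by
        group
      rw [hgeq, hre] at hc
      have hc2 : tE σ τ e₁ j₁ * (g' * aP σ τ m * g'⁻¹) * (tE σ τ e₁ j₁)⁻¹ = aP σ τ n := by
        have h7 : aP σ τ c * (tE σ τ e₁ j₁ * (g' * aP σ τ m * g'⁻¹) * (tE σ τ e₁ j₁)⁻¹)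
            = aP σ τ n * aP σ τ c := by
          rw [← hc]; group
        have h8 := h7
        rw [aP_comm σ τ n c] at h8
        exact mul_left_cancel h8
      have hc3 : g' * aP σ τ m * g'⁻¹ = (tE σ τ e₁ j₁)⁻¹ * aP σ τ n * tE σ τ e₁ j₁ := by
        rw [← hc2]; group
      -- evaluate at NF g'
      have heval := congrArg (fun z => ((φh σ τ hσ hτ z) (NF σ τ hσ hτ g')).1) hc3
      try dsimp only at heval
      -- LHS of heval
      have hLHS : ((φh σ τ hσ hτ (g' * aP σ τ m * g'⁻¹)) (NF σ τ hσ hτ g')).1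
          = ((φh σ τ hσ hτ g') ⟨(m, []), valid_nil σ τ⟩).1 := by
        rw [map_mul, map_mul, map_inv, Equiv.Perm.mul_apply, Equiv.Perm.mul_apply]
        congr 2
        show (φh σ τ hσ hτ (aP σ τ m)) ((φh σ τ hσ hτ g')⁻¹ ((φh σ τ hσ hτ g') (x0 σ τ)))
          = (⟨(m, []), valid_nil σ τ⟩ : X σ τ)
        rw [Equiv.Perm.inv_eq_iff_eq.mpr rfl, φh_aP]
        exact Subtype.ext (by show ((0:ℤ) + m, ([] : List (Letter k))) = (m, []); rw [zero_add])
      -- RHS of heval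
      have hOk : Ok σ τ (j₁, e₁, c₁) := hvg.1 _ (List.mem_cons_self)
      have hnc : c₁ = 0 → ∀ c₂ l₂, l ≠ (j₁, !e₁, c₂) :: l₂ := by
        intro h0 c₂ l₂ hl2
        have h2 := hvg.2
        rw [hl2, List.isChain_cons_cons] at h2
        have := h2.1 h0 rfl
        simp at this
      have hpt1 : ((tP σ τ hσ hτ e₁ j₁) (NF σ τ hσ hτ g')).1 = (0, (j₁, e₁, c₁) :: l) := by
        show tFun σ τ e₁ j₁ (NF σ τ hσ hτ g').1 = _
        rw [hNg', tFun_push σ τ (q := 0) (r := c₁) (by ring) hOk.1 hOk.2 hnc, mul_zero]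
      have hRHS : ((φh σ τ hσ hτ ((tE σ τ e₁ j₁)⁻¹ * aP σ τ n * tE σ τ e₁ j₁)) (NF σ τ hσ hτ g')).1
          = tFun σ τ (!e₁) j₁ (n, (j₁, e₁, c₁) :: l) := by
        rw [map_mul, map_mul, map_inv, φh_aP, φh_t, tP_inv,
          Equiv.Perm.mul_apply, Equiv.Perm.mul_apply]
        show tFun σ τ (!e₁) j₁ ((shiftP σ τ n) ((tP σ τ hσ hτ e₁ j₁) (NF σ τ hσ hτ g'))).1 = _
        congr 1
        show (((tP σ τ hσ hτ e₁ j₁) (NF σ τ hσ hτ g')).1.1 + n,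
          ((tP σ τ hσ hτ e₁ j₁) (NF σ τ hσ hτ g')).1.2) = (n, (j₁, e₁, c₁) :: l)
        rw [hpt1, zero_add]
      rw [hLHS, hRHS] at heval
      -- length facts
      have hlen : ((φh σ τ hσ hτ g') ⟨(m, []), valid_nil σ τ⟩).1.2.length = L := by
        rw [len_eq σ τ hσ hτ, hNg']
        exact hL
      have hu' := mo_ne σ τ hσ hτ (!e₁) j₁
      obtain ⟨q, r, hnq, h0, h1⟩ := exQR (mo σ τ (!e₁) j₁) n hu'
      by_cases hr : r = 0
      · -- good case
        subst hr
        rw [add_zero] at hnq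
        have hstep : (tE σ τ e₁ j₁)⁻¹ * aP σ τ n * tE σ τ e₁ j₁
            = aP σ τ (mo σ τ e₁ j₁ * q) := by
          have hk1 := keyG σ τ (!e₁) j₁ q
          rw [Bool.not_not] at hk1
          rw [← tE_inv σ τ e₁ j₁] at hk1
          rw [hnq, hk1, inv_mul_cancel_right]
        have hc4 : g' * aP σ τ m * g'⁻¹ = aP σ τ (mo σ τ e₁ j₁ * q) := by
          rw [hc3, hstep]
        have hch := ih g' m (mo σ τ e₁ j₁ * q) (by rw [hNg']; exact hL) hc4
        refine Relation.ReflTransGen.tail hch ?_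
        refine ⟨j₁, ?_⟩
        cases e₁ with
        | true =>
            left
            constructor
            · simp only [mo, if_true]
              exact Dvd.intro q rfl
            · simp only [mo, Bool.not_true, Bool.false_eq_true, if_false, if_true] at hnq ⊢
              rw [hnq]; ring
        | false =>
            right
            constructor
            · simp only [mo, Bool.false_eq_true, if_false]
              exact Dvd.intro q rfl
            · simp only [mo, Bool.not_false, Bool.false_eq_true, if_false, if_true] at hnq ⊢
              rw [hnq]; ring
      · -- impossible case
        exfalso
        have hpush := tFun_push σ τ (l := (j₁, e₁, c₁) :: l) hnq h0 h1
          (fun hr0 _ _ _ => hr hr0)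
        rw [hpush] at heval
        have hlen2 := congrArg (fun p => p.2.length) heval
        dsimp only at hlen2
        rw [hlen] at hlen2
        simp only [List.length_cons] at hlen2
        omega
include hσ hτ in
lemma step_conj {m' n' : ℤ} (h : Step σ τ m' n') : IsConj (aP σ τ m') (aP σ τ n') := by
  obtain ⟨j, ⟨⟨q, hq⟩, heq⟩ | ⟨⟨q, hq⟩, heq⟩⟩ := h
  · have hn : n' = τ j * q := by
      apply mul_right_cancel₀ (hσ j)
      rw [heq, hq]; ring
    rw [isConj_iff]
    refine ⟨tE σ τ true j, ?_⟩
    have hk1 := keyG σ τ true j q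
    simp only [mo, Bool.not_true, Bool.false_eq_true, if_false, if_true] at hk1
    rw [hq, hn, hk1, mul_inv_cancel_right]
  · have hn : n' = σ j * q := by
      apply mul_right_cancel₀ (hτ j)
      rw [heq, hq]; ring
    rw [isConj_iff]
    refine ⟨tE σ τ false j, ?_⟩
    have hk1 := keyG σ τ false j q
    simp only [mo, Bool.not_false, Bool.false_eq_true, if_false, if_true] at hk1
    rw [hq, hn, hk1, mul_inv_cancel_right]

include hσ hτ in
lemma easy_dir {m n : ℤ} (h : Relation.ReflTransGen (Step σ τ) m n) :
    IsConj (aP σ τ m) (aP σ τ n) := by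
  induction h with
  | refl => exact IsConj.refl _
  | tail _ hst ih => exact ih.trans (step_conj σ τ hσ hτ hst)

/-- bridge between `Fin`-indexed chains and `ReflTransGen` -/
lemma chain_iff (m n : ℤ) :
    (∃ s : ℕ, ∃ ms : Fin (s + 1) → ℤ, ms 0 = m ∧ ms (Fin.last s) = n ∧
        ∀ i : Fin s, Step σ τ (ms i.castSucc) (ms i.succ)) ↔
    Relation.ReflTransGen (Step σ τ) m n := by
  constructor
  · rintro ⟨s, ms, h0, hl, hst⟩
    subst h0; subst hl
    induction s with
    | zero => exact Relation.ReflTransGen.refl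
    | succ s ih =>
        have hstep : Step σ τ (ms 0) (ms 1) := by
          have := hst 0
          simpa using this
        refine Relation.ReflTransGen.head hstep ?_
        have htail := ih (fun i : Fin (s+1) => ms i.succ) ?_
        · have h9 : (Fin.last s).succ = Fin.last (s+1) := by
            ext; simp [Fin.last]
          rwa [h9] at htail
        · intro i
          have := hst i.succ
          have h10 : (i.succ).castSucc = (i.castSucc).succ := (Fin.succ_castSucc i).symm
          rwa [h10] at this
  · intro h
    induction h with
    | refl =>
        exact ⟨0, fun _ => m, rfl, rfl, fun i => i.elim0⟩
    | @tail b c hab hbc ih =>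
        obtain ⟨s, ms, h0, hl, hst⟩ := ih
        refine ⟨s + 1, Fin.snoc ms c, ?_, ?_, ?_⟩
        · rw [show (0 : Fin (s + 2)) = (0 : Fin (s+1)).castSucc from rfl, Fin.snoc_castSucc]
          exact h0
        · rw [Fin.snoc_last]
        · intro i
          refine Fin.lastCases ?_ ?_ i
          · rw [Fin.succ_last, Fin.snoc_last, Fin.snoc_castSucc, hl]
            exact hbc
          · intro i2
            rw [Fin.snoc_castSucc, Fin.succ_castSucc, Fin.snoc_castSucc]
            exact hst i2
end BS9

/-- Proposition 9.1: in the GBS group `G = ⟨a, t_1, …, t_k ∣ t_i a^{σ_i} t_i⁻¹ = a^{τ_i}⟩`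
(one vertex, `k` loops, all `σ_i, τ_i` nonzero), the elements `a^m` and `a^n` are
conjugate if and only if there is a conjugating sequence `m_0 = m, m_1, …, m_s = n`:
for each `i < s` there is `j` with either `σ_j ∣ m_i` and `m_{i+1} σ_j = m_i τ_j`, or
`τ_j ∣ m_i` and `m_{i+1} τ_j = m_i σ_j`. -/
theorem statement8 (k : ℕ) (hk : 1 ≤ k) (σ τ : Fin k → ℤ)
    (hσ : ∀ i, σ i ≠ 0) (hτ : ∀ i, τ i ≠ 0) (m n : ℤ) :
    IsConj ((PresentedGroup.of (Sum.inl ()) : PresentedGroup (BSRels k σ τ)) ^ m)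
        ((PresentedGroup.of (Sum.inl ()) : PresentedGroup (BSRels k σ τ)) ^ n) ↔
      ∃ s : ℕ, ∃ ms : Fin (s + 1) → ℤ, ms 0 = m ∧ ms (Fin.last s) = n ∧
        ∀ i : Fin s, ∃ j : Fin k,
          (σ j ∣ ms i.castSucc ∧ ms i.succ * σ j = ms i.castSucc * τ j) ∨
          (τ j ∣ ms i.castSucc ∧ ms i.succ * τ j = ms i.castSucc * σ j) := by
  constructor
  · intro hconj
    obtain ⟨g, hg⟩ := isConj_iff.mp hconj
    have hg' : g * BS9.aP σ τ m * g⁻¹ = BS9.aP σ τ n := hg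
    have hrtg := BS9.main_fwd σ τ hσ hτ _ g m n rfl hg'
    exact (BS9.chain_iff σ τ m n).mpr hrtg
  · intro hch
    have hconj : IsConj (BS9.aP σ τ m) (BS9.aP σ τ n) :=
      BS9.easy_dir σ τ hσ hτ ((BS9.chain_iff σ τ m n).mp hch)
    exact hconj
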